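/- Let G = (V,E) be a finite undirected unweighted graph and let r, y ∈ V. Suppose there is a shortest path from r to y in G on which a vertex x appears with w being the vertex immediately following x (on the side of y). Then δ(r,w,x) + δ(w,y) ≤ 3·δ(r,y,x) (as an inequality in ℕ∞). -/

import Mathlib

open scoped ENNReal Classical

/-- The graph `G` with vertex `x` "failed": edges incident to `x` are removed,
so that walks in `G.avoid x` are exactly walks of `G` avoiding `x`
(for endpoints different from `x`). -/
def SimpleGraph.avoid {V : Type*} (G : SimpleGraph V) (x : V) : SimpleGraph V where
  Adj a b := G.Adj a b ∧ a ≠ x ∧ b ≠ x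
  symm := ⟨fun _ _ h => ⟨h.1.symm, h.2.2, h.2.1⟩⟩
  loopless := ⟨fun _ h => G.irrefl h.1⟩

/-- `δ(a,b,x)` : the distance (in `ℕ∞`) between `a` and `b` in `G − x`,
with the convention that it is `∞` if `a = x` or `b = x`. -/
noncomputable def davoid {V : Type*} (G : SimpleGraph V) (a b x : V) : ℕ∞ :=
  if a = x ∨ b = x then ⊤ else (G.avoid x).edist a b

/-- `δ(v,B)` : distance from `v` to the set `B`. -/
noncomputable def dset {V : Type*} (G : SimpleGraph V) (v : V) (B : Set V) : ℕ∞ :=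
  ⨅ w ∈ B, G.edist v w

/-- `δ(v,B,x)` : distance from `v` to the set `B` in `G − x`. -/
noncomputable def dsetAvoid {V : Type*} (G : SimpleGraph V) (v : V) (B : Set V) (x : V) : ℕ∞ :=
  ⨅ w ∈ B, davoid G v w x

/-- `Ball(v,A,B) = {w ∈ A : δ(v,w) < δ(v,B)}`. -/
def ball {V : Type*} (G : SimpleGraph V) (v : V) (A B : Set V) : Set V :=
  {w ∈ A | G.edist v w < dset G v B}

/-- `Ball^x(v,A,B) = {w ∈ A : δ(v,w,x) < δ(v,B,x)}`. -/
def ballAvoid {V : Type*} (G : SimpleGraph V) (v : V) (A B : Set V) (x : V) : Set V :=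
  {w ∈ A | davoid G v w x < dsetAvoid G v B x}

/-- `Ball^x(v,A,B,ε) = {w ∈ A : (1+ε)·δ(v,w,x) < δ(v,B,x)}`. -/
def ballTrunc {V : Type*} (G : SimpleGraph V) (v : V) (A B : Set V) (x : V) (ε : ℝ) : Set V :=
  {w ∈ A | ENNReal.ofReal (1 + ε) * (davoid G v w x : ℝ≥0∞) < (dsetAvoid G v B x : ℝ≥0∞)}

/-- `C^x(w,A,B,ε) = {v ∈ V : (1+ε)·δ(v,w,x) < δ(v,B,x)}`. -/
def clusterTrunc {V : Type*} (G : SimpleGraph V) (w : V) (B : Set V) (x : V) (ε : ℝ) : Set V :=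
  {v | ENNReal.ofReal (1 + ε) * (davoid G v w x : ℝ≥0∞) < (dsetAvoid G v B x : ℝ≥0∞)}

lemma suffix_walk {V : Type*} {G : SimpleGraph V} :
    ∀ {r y : V} (Q : G.Walk r y) (l₁ l₂ : List V) (w : V),
      Q.support = l₁ ++ w :: l₂ → ∃ q : G.Walk w y, q.support = w :: l₂ := by
  intro r y Q
  induction Q with
  | nil =>
    intro l₁ l₂ w h
    simp only [SimpleGraph.Walk.support_nil] at h
    match l₁, h with
    | [], h =>
      simp only [List.nil_append, List.cons.injEq] at h
      obtain ⟨rfl, rfl⟩ := h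
      exact ⟨SimpleGraph.Walk.nil, rfl⟩
    | a :: l₁, h =>
      simp only [List.cons_append, List.cons.injEq] at h
      exact absurd h.2.symm (List.append_ne_nil_of_right_ne_nil _ (List.cons_ne_nil _ _))
  | @cons r v y hadj p ih =>
    intro l₁ l₂ w h
    rw [SimpleGraph.Walk.support_cons] at h
    match l₁, h with
    | [], h =>
      simp only [List.nil_append, List.cons.injEq] at h
      obtain ⟨rfl, h2⟩ := h
      exact ⟨SimpleGraph.Walk.cons hadj p, by rw [SimpleGraph.Walk.support_cons, h2]⟩
    | a :: l₁, h =>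
      simp only [List.cons_append, List.cons.injEq] at h
      exact ih l₁ l₂ w h.2

/-- if on some shortest path `Q` from `r` to `y` the vertex `w`
immediately follows the vertex `x` (on the side of `y`), then
`δ(r,w,x) + δ(w,y) ≤ 3·δ(r,y,x)`. -/
theorem stmt1 {V : Type*} [Fintype V] (G : SimpleGraph V) (r y x w : V)
    (Q : G.Walk r y) (hQ : Q.IsPath) (hQlen : (Q.length : ℕ∞) = G.edist r y)
    (hxw : ∃ l₁ l₂ : List V, Q.support = l₁ ++ x :: w :: l₂) :
    davoid G r w x + G.edist w y ≤ 3 * davoid G r y x := by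
  obtain ⟨l₁, l₂, hsup⟩ := hxw
  by_cases hD : davoid G r y x = ⊤
  · rw [hD]
    simp [ENNReal.mul_top]
  have hcond : ¬(r = x ∨ y = x) := by
    intro h
    rw [davoid, if_pos h] at hD
    exact hD rfl
  push_neg at hcond
  obtain ⟨hr, hy⟩ := hcond
  -- x ∉ w :: l₂
  have hnodup : (l₁ ++ x :: w :: l₂).Nodup := hsup ▸ hQ.support_nodup
  have hxwl : x ∉ w :: l₂ := by
    have := (List.nodup_append.mp hnodup).2.1
    exact fun hmem => (List.nodup_cons.mp this).1 hmem
  have hw : w ≠ x := fun h => hxwl (h ▸ List.mem_cons_self)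
  -- suffix walk
  obtain ⟨q, hqsup⟩ := suffix_walk Q (l₁ ++ [x]) l₂ w (by simpa using hsup)
  have hxq : x ∉ q.support := hqsup ▸ hxwl
  -- transfer to avoid graph
  have hedges : ∀ e ∈ q.edges, e ∈ (G.avoid x).edgeSet := by
    intro e he
    induction e using Sym2.ind with
    | _ a b =>
      exact ⟨q.adj_of_mem_edges he,
        fun h => hxq (h ▸ q.fst_mem_support_of_mem_edges he),
        fun h => hxq (h ▸ q.snd_mem_support_of_mem_edges he)⟩
  set q' := q.transfer (G.avoid x) hedges with hq'
  have hAle : G.avoid x ≤ G := fun a b h => h.1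
  -- length facts
  have hqlen : q.length ≤ Q.length := by
    have h1 : q.support.length = q.length + 1 := q.length_support
    have h2 : Q.support.length = Q.length + 1 := Q.length_support
    rw [hqsup] at h1
    rw [hsup] at h2
    simp only [List.length_append, List.length_cons] at h1 h2
    omega
  set A := (G.avoid x).edist r y with hA
  have hryA : G.edist r y ≤ A := SimpleGraph.edist_anti (G := G.avoid x) hAle
  have hQA : (Q.length : ℕ∞) ≤ A := hQlen ▸ hryA
  have hwyA : (G.avoid x).edist w y ≤ A := by
    calc (G.avoid x).edist w y ≤ q'.length := q'.edist_le
    _ = (q.length : ℕ∞) := by rw [hq', SimpleGraph.Walk.length_transfer]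
    _ ≤ (Q.length : ℕ∞) := by exact_mod_cast hqlen
    _ ≤ A := hQA
  have hGwyA : G.edist w y ≤ A :=
    le_trans (SimpleGraph.edist_anti (G := G.avoid x) hAle) hwyA
  have htri : (G.avoid x).edist r w ≤ A + A := by
    calc (G.avoid x).edist r w ≤ (G.avoid x).edist r y + (G.avoid x).edist y w :=
        SimpleGraph.edist_triangle
    _ = A + (G.avoid x).edist w y := by rw [SimpleGraph.edist_comm (u := y) (v := w)]
    _ ≤ A + A := add_le_add_right hwyA _
  have hd1 : davoid G r w x = (G.avoid x).edist r w := by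
    rw [davoid, if_neg]; push_neg; exact ⟨hr, hw⟩
  have hd2 : davoid G r y x = A := by
    rw [davoid, if_neg]; push_neg; exact ⟨hr, hy⟩
  rw [hd1, hd2]
  calc (G.avoid x).edist r w + G.edist w y ≤ (A + A) + A := add_le_add htri hGwyA
  _ = 3 * A := by ring
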